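/- Let D ⊂ ℝ^d be a bounded measurable set, let T > 0, and let G satisfy the Gaussian property with constants c₁, c₂. Let f : ℝ → ℝ satisfy |f(u)| ≤ L(1+|u|) for all u, and let u : D × [0,T] → ℝ be measurable with u(·,s) ∈ L²(D) for each s. Then for every t ∈ (0,T], ∫_D ( ∫_0^t ∫_D |G(x,t;y,s) f(u(y,s))| dy ds )² dx ≤ C ( 1 + ∫_0^t ‖u(·,s)‖₂² ds ), where C depends only on c₁, c₂, d, L, T and the Lebesgue measure of D. -/

import Mathlib

open MeasureTheory Real Set
open scoped ENNReal NNReal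

noncomputable section

/-- Euclidean space `ℝ^d`. -/
abbrev Euc (d : ℕ) : Type := EuclideanSpace ℝ (Fin d)

/-- The Gaussian heat-kernel bound `r^{-d/2} exp(-c₂ |x-y|² / r)`. -/
def gaussKer (d : ℕ) (c₂ r : ℝ) (x y : Euc d) : ℝ :=
  r ^ (-(d : ℝ) / 2) * Real.exp (-c₂ * ‖x - y‖ ^ 2 / r)

/-- `G` satisfies the Gaussian property with constants `c₁, c₂` on `D × [0,T]`. -/
def GaussianProperty {d : ℕ} (D : Set (Euc d)) (T c₁ c₂ : ℝ)
    (G : Euc d → ℝ → Euc d → ℝ → ℝ) : Prop :=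
  ∀ x ∈ D, ∀ y ∈ D, ∀ s t : ℝ, 0 ≤ s → s < t → t ≤ T →
    |G x t y s| ≤ c₁ * gaussKer d c₂ (t - s) x y

/-- Second-variable difference estimate with exponent `δ`. -/
def SecondVarDiff {d : ℕ} (D : Set (Euc d)) (T c₂ δ : ℝ)
    (G : Euc d → ℝ → Euc d → ℝ → ℝ) : Prop :=
  ∀ x ∈ D, ∀ y ∈ D, ∀ r v t : ℝ, 0 < r → r < v → v < t → t ≤ T →
    ∃ ts ∈ Ioo r v,
      |G x t y v - G x t y r| ≤ (t - v) ^ (-δ) * (v - r) ^ δ * gaussKer d c₂ (t - ts) x y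

/-- First-variable difference estimate with exponent `δ`. -/
def FirstVarDiff {d : ℕ} (D : Set (Euc d)) (T c₂ δ : ℝ)
    (G : Euc d → ℝ → Euc d → ℝ → ℝ) : Prop :=
  ∀ x ∈ D, ∀ y ∈ D, ∀ v s t : ℝ, 0 ≤ v → v < s → s < t → t ≤ T →
    ∃ vs ∈ Ioo s t,
      |G x t y v - G x s y v| ≤ (t - s) ^ δ * (s - v) ^ (-δ) * gaussKer d c₂ (vs - v) x y

/-- Mixed second-difference estimate with exponent `δ`. -/
def MixedDiff {d : ℕ} (D : Set (Euc d)) (T c₂ δ : ℝ)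
    (G : Euc d → ℝ → Euc d → ℝ → ℝ) : Prop :=
  ∀ x ∈ D, ∀ y ∈ D, ∀ r v s t : ℝ, 0 < r → r < v → v < s → s < t → t ≤ T →
    ∃ vs ∈ Ioo s t, ∃ rs ∈ Ioo s t,
      |G x t y v - G x s y v - G x t y r + G x s y r| ≤
        (t - s) ^ δ * (s - v)⁻¹ * (v - r) ^ (1 - δ) *
          (gaussKer d c₂ (vs - v) x y + gaussKer d c₂ (rs - r) x y)

/-- The `L²(D)` norm (with values in `[0,∞]`). -/
def L2N {d : ℕ} (D : Set (Euc d)) (f : Euc d → ℝ) : ℝ≥0∞ :=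
  eLpNorm f 2 (volume.restrict D)

/-- The Hölder-type seminorm `‖f‖_{α,0;t}` (with values in `[0,∞]`). -/
def hsem (α t : ℝ) (f : ℝ → ℝ) : ℝ≥0∞ :=
  ⨆ (u : ℝ) (v : ℝ) (_ : 0 ≤ u) (_ : u < v) (_ : v < t),
    (ENNReal.ofReal (|f v - f u| / (v - u) ^ (1 - α)) +
      ∫⁻ z in Ioo u v, ENNReal.ofReal (|f u - f z| / (z - u) ^ (2 - α)))

/-- The Riemann–Liouville left-sided fractional derivative `D^α_{a+} F`. -/
def RLplus (α a : ℝ) (F : ℝ → ℝ) (s : ℝ) : ℝ :=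
  (Real.Gamma (1 - α))⁻¹ *
    (F s / (s - a) ^ α + α * ∫ v in Ioo a s, (F s - F v) / (s - v) ^ (α + 1))

/-- The Riemann–Liouville right-sided fractional derivative `D^{1-α}_{b-} g_{b-}`
(of the function `g_{b-}(x) = g(b) - g(x)`). -/
def RLminus (α b : ℝ) (g : ℝ → ℝ) (s : ℝ) : ℝ :=
  (Real.Gamma α)⁻¹ *
    ((g b - g s) / (b - s) ^ (1 - α) +
      (1 - α) * ∫ y in Ioo s b, (g y - g s) / (y - s) ^ (2 - α))

/-- The (pointwise, real-valued) generalized Lebesgue–Stieltjes integral `∫_a^b F dg`. -/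
def glsIntegral (α a b : ℝ) (F g : ℝ → ℝ) : ℝ :=
  ∫ s in Ioc a b, RLplus α a F s * RLminus α b g s

/-- The square of the norm `‖u‖_{α,2,t}` of `𝓑^{α,2}(0,t;L²(D))` (with values in `[0,∞]`). -/
def wnormSq {d : ℕ} (D : Set (Euc d)) (α t : ℝ) (u : ℝ → Euc d → ℝ) : ℝ≥0∞ :=
  (⨆ s ∈ Icc (0 : ℝ) t, L2N D (u s)) ^ 2 +
    ∫⁻ s in Ioc (0 : ℝ) t,
      (∫⁻ v in Ioo (0 : ℝ) s, L2N D (u s - u v) * ENNReal.ofReal ((s - v) ^ (-α - 1))) ^ 2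

/-- The kernel `a_{j,t}(u)(x,s) = ∫_D G(x,t;y,s) h(u(y,s)) e(y) dy` with `h(z) = p z + q`. -/
def aKer {d : ℕ} (D : Set (Euc d)) (G : Euc d → ℝ → Euc d → ℝ → ℝ) (p q : ℝ)
    (u : ℝ → Euc d → ℝ) (e : Euc d → ℝ) (t : ℝ) (x : Euc d) (s : ℝ) : ℝ :=
  ∫ y in D, G x t y s * (p * u s y + q) * e y

/-- `I_h(x,t) = Σ_j μ_j^{1/2} ∫_0^t a_{j,t}(u)(x,s) dZ_j(s)` (pointwise in `x`). -/
def Ihat {d : ℕ} (D : Set (Euc d)) (G : Euc d → ℝ → Euc d → ℝ → ℝ) (p q : ℝ)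
    (u : ℝ → Euc d → ℝ) (e : ℕ → Euc d → ℝ) (μ : ℕ → ℝ) (Z : ℕ → ℝ → ℝ)
    (α t : ℝ) (x : Euc d) : ℝ :=
  ∑' j, Real.sqrt (μ j) * glsIntegral α 0 t (fun s => aKer D G p q u (e j) t x s) (Z j)

end

open Function
section Aux

open ENNReal

lemma gaussKer_nonneg {d : ℕ} {c₂ r : ℝ} (hr : 0 < r) (x y : Euc d) :
    0 ≤ gaussKer d c₂ r x y := by
  unfold gaussKer; positivity

lemma gaussKer_symm {d : ℕ} (c₂ r : ℝ) (x y : Euc d) :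
    gaussKer d c₂ r x y = gaussKer d c₂ r y x := by
  unfold gaussKer; rw [norm_sub_rev]

lemma measurable_gaussKer_joint (d : ℕ) (c₂ t : ℝ) :
    Measurable fun q : Euc d × ℝ × Euc d => gaussKer d c₂ (t - q.2.1) q.1 q.2.2 := by
  unfold gaussKer; fun_prop

lemma lintegral_exp_neg_mul_sq_norm (d : ℕ) {b : ℝ} (hb : 0 < b) :
    ∫⁻ z : Euc d, ENNReal.ofReal (Real.exp (-b * ‖z‖^2)) =
      ENNReal.ofReal ((π/b) ^ ((d:ℝ)/2)) := by
  have hint : Integrable (fun z : Euc d => Real.exp (-b * ‖z‖^2)) := by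
    have h := (GaussianFourier.integrable_cexp_neg_mul_sq_norm_add
      (b := (b:ℂ)) (by simpa using hb) 0 (0 : Euc d)).re
    refine h.congr (Filter.Eventually.of_forall fun z => ?_)
    simp only [zero_mul, add_zero]
    rw [show (-(b:ℂ) * (‖z‖:ℂ)^2) = ((-b * ‖z‖^2 : ℝ) : ℂ) by push_cast; ring]
    exact Complex.exp_ofReal_re _
  rw [← MeasureTheory.ofReal_integral_eq_lintegral_ofReal hint
    (Filter.Eventually.of_forall fun z => (Real.exp_pos _).le)]
  rw [GaussianFourier.integral_rexp_neg_mul_sq_norm hb]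
  congr 1
  simp [finrank_euclideanSpace_fin]

lemma lintegral_gaussKer_le {d : ℕ} {c₂ : ℝ} (hc₂ : 0 < c₂) (D : Set (Euc d)) (x : Euc d)
    {r : ℝ} (hr : 0 < r) :
    ∫⁻ y in D, ENNReal.ofReal (gaussKer d c₂ r x y) ≤
      ENNReal.ofReal ((π / c₂) ^ ((d:ℝ)/2)) := by
  calc ∫⁻ y in D, ENNReal.ofReal (gaussKer d c₂ r x y)
      ≤ ∫⁻ y, ENNReal.ofReal (gaussKer d c₂ r x y) := setLIntegral_le_lintegral _ _
    _ = ∫⁻ y, ENNReal.ofReal (r ^ (-(d : ℝ) / 2)) *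
          ENNReal.ofReal (Real.exp (-(c₂/r) * ‖y - x‖ ^ 2)) := by
        refine lintegral_congr fun y => ?_
        rw [gaussKer, ← ENNReal.ofReal_mul (by positivity), norm_sub_rev]
        congr 2
        field_simp
    _ = ENNReal.ofReal (r ^ (-(d : ℝ) / 2)) *
          ∫⁻ y, ENNReal.ofReal (Real.exp (-(c₂/r) * ‖y - x‖ ^ 2)) :=
        lintegral_const_mul' _ _ ENNReal.ofReal_ne_top
    _ = ENNReal.ofReal (r ^ (-(d : ℝ) / 2)) *
          ∫⁻ y : Euc d, ENNReal.ofReal (Real.exp (-(c₂/r) * ‖y‖ ^ 2)) := by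
        rw [lintegral_sub_right_eq_self
          (fun y : Euc d => ENNReal.ofReal (Real.exp (-(c₂/r) * ‖y‖ ^ 2))) x]
    _ = ENNReal.ofReal (r ^ (-(d : ℝ) / 2)) *
          ENNReal.ofReal ((π/(c₂/r)) ^ ((d:ℝ)/2)) := by
        rw [lintegral_exp_neg_mul_sq_norm d (by positivity)]
    _ = ENNReal.ofReal ((π / c₂) ^ ((d:ℝ)/2)) := by
        rw [← ENNReal.ofReal_mul (by positivity)]
        congr 1
        rw [show π/(c₂/r) = (π/c₂) * r by field_simp,
          Real.mul_rpow (by positivity) hr.le, ← mul_assoc, mul_comm,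
          ← mul_assoc, ← Real.rpow_add hr]
        rw [show (d:ℝ)/2 + -(d:ℝ)/2 = 0 by ring, Real.rpow_zero, one_mul]

lemma ENNReal.sq_rpow_half (a : ℝ≥0∞) : (a ^ ((1:ℝ)/2)) ^ 2 = a := by
  rw [← ENNReal.rpow_natCast (a ^ ((1:ℝ)/2)) 2, ← ENNReal.rpow_mul]
  norm_num

lemma L2N_sq {d : ℕ} (D : Set (Euc d)) (f : Euc d → ℝ) :
    L2N D f ^ 2 = ∫⁻ y in D, ENNReal.ofReal (|f y|) ^ 2 := by
  rw [L2N, eLpNorm_eq_lintegral_rpow_enorm_toReal two_ne_zero ENNReal.ofNat_ne_top]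
  simp only [ENNReal.toReal_ofNat]
  rw [ENNReal.sq_rpow_half]
  refine lintegral_congr fun y => ?_
  rw [← Real.enorm_eq_ofReal_abs, ← ENNReal.rpow_natCast (‖f y‖ₑ) 2]
  norm_num

lemma lintegral_cauchy {α : Type*} [MeasurableSpace α] {μ : Measure α} {g w : α → ℝ≥0∞}
    (hg : AEMeasurable g μ) (hw : AEMeasurable w μ) :
    (∫⁻ p, g p * w p ∂μ) ^ 2 ≤ (∫⁻ p, g p ∂μ) * ∫⁻ p, g p * w p ^ 2 ∂μ := by
  have hpq : (2:ℝ).HolderConjugate 2 := Real.HolderConjugate.two_two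
  have h := ENNReal.lintegral_mul_le_Lp_mul_Lq μ hpq
    (f := fun p => g p ^ ((1:ℝ)/2)) (g := fun p => g p ^ ((1:ℝ)/2) * w p)
    (hg.pow_const _) ((hg.pow_const _).mul hw)
  have h1 : ∀ p, g p ^ ((1:ℝ)/2) * (g p ^ ((1:ℝ)/2) * w p) = g p * w p := by
    intro p
    rw [← mul_assoc, ← ENNReal.rpow_add_of_nonneg _ _ (by norm_num) (by norm_num)]
    norm_num
  have h2 : ∀ p, (g p ^ ((1:ℝ)/2)) ^ (2:ℝ) = g p := by
    intro p; rw [← ENNReal.rpow_mul]; norm_num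
  have h3 : ∀ p, (g p ^ ((1:ℝ)/2) * w p) ^ (2:ℝ) = g p * w p ^ 2 := by
    intro p
    rw [ENNReal.mul_rpow_of_nonneg _ _ (by norm_num), h2 p,
      ← ENNReal.rpow_natCast (w p) 2]
    norm_num
  simp only [Pi.mul_apply, h1, h2, h3] at h
  calc (∫⁻ p, g p * w p ∂μ) ^ 2
      ≤ ((∫⁻ p, g p ∂μ) ^ ((1:ℝ)/2) * (∫⁻ p, g p * w p ^ 2 ∂μ) ^ ((1:ℝ)/2)) ^ 2 := by
        apply pow_le_pow_left₀ zero_le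
        convert h using 3 <;> norm_num
    _ = (∫⁻ p, g p ∂μ) * ∫⁻ p, g p * w p ^ 2 ∂μ := by
        rw [mul_pow, ENNReal.sq_rpow_half, ENNReal.sq_rpow_half]

end Aux

set_option maxHeartbeats 2000000 in
/-- the `L²`-bound for the drift term built from a Gaussian kernel. -/
theorem stmt_4 (d : ℕ) (D : Set (Euc d)) (hD : Bornology.IsBounded D)
    (hDm : MeasurableSet D) (T : ℝ) (hT : 0 < T) (c₁ c₂ L : ℝ)
    (hc₁ : 0 < c₁) (hc₂ : 0 < c₂) (hL : 0 < L) :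
    ∃ C : ℝ≥0∞, C ≠ ⊤ ∧
      ∀ G : Euc d → ℝ → Euc d → ℝ → ℝ, GaussianProperty D T c₁ c₂ G →
      ∀ f : ℝ → ℝ, (∀ z : ℝ, |f z| ≤ L * (1 + |z|)) →
      ∀ u : ℝ → Euc d → ℝ, Measurable (Function.uncurry u) →
        (∀ s : ℝ, MemLp (u s) 2 (volume.restrict D)) →
      ∀ t ∈ Ioc (0 : ℝ) T,
        (∫⁻ x in D, (∫⁻ s in Ioo (0 : ℝ) t, ∫⁻ y in D,
            ENNReal.ofReal |G x t y s * f (u s y)|) ^ 2) ≤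
          C * (1 + ∫⁻ s in Ioo (0 : ℝ) t, L2N D (u s) ^ 2) := by
  have hDfin : volume D ≠ ⊤ := hD.measure_lt_top.ne
  set K : ℝ≥0∞ := ENNReal.ofReal ((π / c₂) ^ ((d:ℝ)/2)) with hK
  set c₁K : ℝ≥0∞ := ENNReal.ofReal c₁ * K with hc₁K
  have hc₁Kne : c₁K ≠ ⊤ := ENNReal.mul_ne_top ENNReal.ofReal_ne_top ENNReal.ofReal_ne_top
  refine ⟨c₁K * ENNReal.ofReal T * (c₁K * (ENNReal.ofReal (2*L^2) *
      (1 + ENNReal.ofReal T * volume D))), ?_, ?_⟩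
  · refine ENNReal.mul_ne_top (ENNReal.mul_ne_top hc₁Kne ENNReal.ofReal_ne_top)
      (ENNReal.mul_ne_top hc₁Kne (ENNReal.mul_ne_top ENNReal.ofReal_ne_top ?_))
    exact ENNReal.add_ne_top.2 ⟨ENNReal.one_ne_top,
      ENNReal.mul_ne_top ENNReal.ofReal_ne_top hDfin⟩
  intro G hG f hf u hu _hu2 t ht
  obtain ⟨ht0, htT⟩ := ht
  set ν : Measure (ℝ × Euc d) := (volume.restrict (Ioo 0 t)).prod (volume.restrict D) with hν
  set g : Euc d → ℝ × Euc d → ℝ≥0∞ :=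
    fun x p => ENNReal.ofReal (c₁ * gaussKer d c₂ (t - p.1) x p.2) with hg
  set w : ℝ × Euc d → ℝ≥0∞ := fun p => ENNReal.ofReal (L * (1 + |u p.1 p.2|)) with hw
  -- measurability
  have hgjm : Measurable fun q : Euc d × ℝ × Euc d => g q.1 q.2 :=
    ENNReal.measurable_ofReal.comp
      (measurable_const.mul (measurable_gaussKer_joint d c₂ t))
  have hgm : ∀ x, Measurable (g x) := fun x => hgjm.comp measurable_prodMk_left
  have hwm : Measurable w := by
    have h1 : Measurable fun p : ℝ × Euc d => |u p.1 p.2| := hu.abs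
    exact ENNReal.measurable_ofReal.comp (measurable_const.mul (measurable_const.add h1))
  -- gaussian integral bounds
  have key_gauss : ∀ (x : Euc d) {r : ℝ}, 0 < r →
      ∫⁻ y in D, ENNReal.ofReal (c₁ * gaussKer d c₂ r x y) ≤ c₁K := by
    intro x r hr
    calc ∫⁻ y in D, ENNReal.ofReal (c₁ * gaussKer d c₂ r x y)
        = ENNReal.ofReal c₁ * ∫⁻ y in D, ENNReal.ofReal (gaussKer d c₂ r x y) := by
          rw [← lintegral_const_mul' _ _ ENNReal.ofReal_ne_top]
          exact lintegral_congr fun y => ENNReal.ofReal_mul hc₁.le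
      _ ≤ ENNReal.ofReal c₁ * K := by
          gcongr
          exact lintegral_gaussKer_le hc₂ D x hr
  have key_gauss_x : ∀ (y : Euc d) {r : ℝ}, 0 < r →
      ∫⁻ x in D, ENNReal.ofReal (c₁ * gaussKer d c₂ r x y) ≤ c₁K := by
    intro y r hr
    simp_rw [gaussKer_symm c₂ r _ y]
    exact key_gauss y hr
  -- Step C : total mass of g x
  have hgInt : ∀ x, ∫⁻ p, g x p ∂ν ≤ c₁K * ENNReal.ofReal T := by
    intro x
    rw [hν, MeasureTheory.lintegral_prod _ (hgm x).aemeasurable]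
    calc ∫⁻ s in Ioo (0:ℝ) t, ∫⁻ y in D, g x (s, y)
        ≤ ∫⁻ _ in Ioo (0:ℝ) t, c₁K := by
          refine lintegral_mono_ae ((ae_restrict_mem measurableSet_Ioo).mono fun s hs => ?_)
          exact key_gauss x (by linarith [hs.2] : (0:ℝ) < t - s)
      _ = c₁K * volume (Ioo (0:ℝ) t) := by
          rw [lintegral_const, Measure.restrict_apply_univ]
      _ ≤ c₁K * ENNReal.ofReal T := by
          gcongr
          rw [Real.volume_Ioo]
          exact ENNReal.ofReal_le_ofReal (by linarith)
  -- Step A : pointwise domination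
  have hdom : ∀ x ∈ D,
      (∫⁻ s in Ioo (0:ℝ) t, ∫⁻ y in D, ENNReal.ofReal |G x t y s * f (u s y)|) ≤
        ∫⁻ p, g x p * w p ∂ν := by
    intro x hx
    rw [hν, MeasureTheory.lintegral_prod (fun p => g x p * w p) ((hgm x).mul hwm).aemeasurable]
    refine lintegral_mono_ae ((ae_restrict_mem measurableSet_Ioo).mono fun s hs => ?_)
    refine lintegral_mono_ae ((ae_restrict_mem hDm).mono fun y hy => ?_)
    have hg0 : 0 ≤ gaussKer d c₂ (t - s) x y :=
      gaussKer_nonneg (by linarith [hs.2] : (0:ℝ) < t - s) x y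
    calc ENNReal.ofReal |G x t y s * f (u s y)|
        ≤ ENNReal.ofReal ((c₁ * gaussKer d c₂ (t - s) x y) * (L * (1 + |u s y|))) := by
          apply ENNReal.ofReal_le_ofReal
          rw [abs_mul]
          exact mul_le_mul (hG x hx y hy s t hs.1.le hs.2 htT) (hf _) (abs_nonneg _)
            (by positivity)
      _ = g x (s, y) * w (s, y) := ENNReal.ofReal_mul (by positivity)
  -- ae fact on ν
  have hae : ∀ᵐ p ∂ν, (0:ℝ) < t - p.1 := by
    rw [ae_iff]
    refine measure_mono_null (fun p hp => ?_) (?_ : ν ((Ioo (0:ℝ) t)ᶜ ×ˢ univ) = 0)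
    · refine ⟨fun hmem => hp ?_, trivial⟩
      simp only [mem_setOf_eq, not_lt] at hp ⊢
      exact sub_pos.mpr hmem.2
    · rw [hν, Measure.prod_prod, Measure.restrict_apply measurableSet_Ioo.compl,
        compl_inter_self, measure_empty, zero_mul]
  -- Step D : swap
  have hswap : ∫⁻ x in D, ∫⁻ p, g x p * w p ^ 2 ∂ν ≤ c₁K * ∫⁻ p, w p ^ 2 ∂ν := by
    have hmeas : AEMeasurable (uncurry fun x p => g x p * w p ^ 2)
        ((volume.restrict D).prod ν) := by
      exact (hgjm.mul ((hwm.comp measurable_snd).pow_const 2)).aemeasurable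
    rw [lintegral_lintegral_swap hmeas]
    calc ∫⁻ p, (∫⁻ x in D, g x p * w p ^ 2) ∂ν
        = ∫⁻ p, (∫⁻ x in D, g x p) * w p ^ 2 ∂ν := by
          exact lintegral_congr fun p => lintegral_mul_const' _ _
            (ENNReal.pow_ne_top ENNReal.ofReal_ne_top)
      _ ≤ ∫⁻ p, c₁K * w p ^ 2 ∂ν := by
          refine lintegral_mono_ae (hae.mono fun p hp => ?_)
          gcongr
          exact key_gauss_x p.2 hp
      _ = c₁K * ∫⁻ p, w p ^ 2 ∂ν := lintegral_const_mul' _ _ hc₁Kne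
  -- Step E : the w integral
  have hwInt : ∫⁻ p, w p ^ 2 ∂ν ≤ ENNReal.ofReal (2*L^2) *
      ((ENNReal.ofReal T * volume D) + ∫⁻ s in Ioo (0:ℝ) t, L2N D (u s) ^ 2) := by
    rw [hν, MeasureTheory.lintegral_prod _ (hwm.pow_const 2).aemeasurable]
    calc ∫⁻ s in Ioo (0:ℝ) t, ∫⁻ y in D, w (s, y) ^ 2
        ≤ ∫⁻ s in Ioo (0:ℝ) t, ENNReal.ofReal (2*L^2) * (volume D + L2N D (u s) ^ 2) := by
          refine lintegral_mono fun s => ?_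
          calc ∫⁻ y in D, w (s, y) ^ 2
              ≤ ∫⁻ y in D, ENNReal.ofReal (2*L^2) * (1 + ENNReal.ofReal |u s y| ^ 2) := by
                refine lintegral_mono fun y => ?_
                show ENNReal.ofReal (L * (1 + |u s y|)) ^ 2 ≤ _
                rw [← ENNReal.ofReal_pow (by positivity)]
                calc ENNReal.ofReal ((L * (1 + |u s y|)) ^ 2)
                    ≤ ENNReal.ofReal (2*L^2 * (1 + |u s y| ^ 2)) :=
                      ENNReal.ofReal_le_ofReal (by nlinarith [abs_nonneg (u s y), mul_nonneg (mul_nonneg hL.le hL.le) (sq_nonneg (1 - |u s y|))])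
                  _ = ENNReal.ofReal (2*L^2) * (1 + ENNReal.ofReal |u s y| ^ 2) := by
                      rw [ENNReal.ofReal_mul (by positivity),
                        ENNReal.ofReal_add one_pos.le (by positivity), ENNReal.ofReal_one,
                        ENNReal.ofReal_pow (abs_nonneg _)]
            _ = ENNReal.ofReal (2*L^2) *
                  ∫⁻ y in D, (1 + ENNReal.ofReal |u s y| ^ 2) :=
                lintegral_const_mul' _ _ ENNReal.ofReal_ne_top
            _ = ENNReal.ofReal (2*L^2) * (volume D + L2N D (u s) ^ 2) := by
                rw [lintegral_add_left measurable_const, setLIntegral_one, L2N_sq]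
      _ = ENNReal.ofReal (2*L^2) *
            ∫⁻ s in Ioo (0:ℝ) t, (volume D + L2N D (u s) ^ 2) :=
          lintegral_const_mul' _ _ ENNReal.ofReal_ne_top
      _ ≤ ENNReal.ofReal (2*L^2) *
            ((ENNReal.ofReal T * volume D) + ∫⁻ s in Ioo (0:ℝ) t, L2N D (u s) ^ 2) := by
          rw [lintegral_add_left measurable_const, lintegral_const,
            Measure.restrict_apply_univ]
          have h1 : volume D * volume (Ioo (0:ℝ) t) ≤ ENNReal.ofReal T * volume D := by
            rw [Real.volume_Ioo, mul_comm]
            exact mul_le_mul_left (ENNReal.ofReal_le_ofReal (by linarith)) _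
          exact mul_le_mul_right (add_le_add h1 le_rfl) _
  -- assemble
  calc ∫⁻ x in D, (∫⁻ s in Ioo (0:ℝ) t, ∫⁻ y in D,
          ENNReal.ofReal |G x t y s * f (u s y)|) ^ 2
      ≤ ∫⁻ x in D, (∫⁻ p, g x p * w p ∂ν) ^ 2 := by
        refine lintegral_mono_ae ((ae_restrict_mem hDm).mono fun x hx => ?_)
        exact pow_le_pow_left₀ zero_le (hdom x hx) 2
    _ ≤ ∫⁻ x in D, (c₁K * ENNReal.ofReal T) * ∫⁻ p, g x p * w p ^ 2 ∂ν := by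
        refine lintegral_mono fun x => ?_
        refine le_trans (lintegral_cauchy (hgm x).aemeasurable hwm.aemeasurable) ?_
        gcongr
        exact hgInt x
    _ = (c₁K * ENNReal.ofReal T) * ∫⁻ x in D, ∫⁻ p, g x p * w p ^ 2 ∂ν :=
        lintegral_const_mul' _ _ (ENNReal.mul_ne_top hc₁Kne ENNReal.ofReal_ne_top)
    _ ≤ (c₁K * ENNReal.ofReal T) * (c₁K * ∫⁻ p, w p ^ 2 ∂ν) := by gcongr
    _ ≤ (c₁K * ENNReal.ofReal T) * (c₁K * (ENNReal.ofReal (2*L^2) *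
          ((ENNReal.ofReal T * volume D) + ∫⁻ s in Ioo (0:ℝ) t, L2N D (u s) ^ 2))) := by
        gcongr
    _ ≤ (c₁K * ENNReal.ofReal T) * (c₁K * (ENNReal.ofReal (2*L^2) *
          ((1 + ENNReal.ofReal T * volume D) *
            (1 + ∫⁻ s in Ioo (0:ℝ) t, L2N D (u s) ^ 2)))) := by
        gcongr
        set A := ENNReal.ofReal T * volume D
        set X := ∫⁻ s in Ioo (0:ℝ) t, L2N D (u s) ^ 2
        calc A + X ≤ (A + X) + (1 + A * X) := le_add_self.trans (by rw [add_comm])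
          _ = (1 + A) * (1 + X) := by ring
    _ = c₁K * ENNReal.ofReal T * (c₁K * (ENNReal.ofReal (2*L^2) *
          (1 + ENNReal.ofReal T * volume D))) *
          (1 + ∫⁻ s in Ioo (0:ℝ) t, L2N D (u s) ^ 2) := by ring
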